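/- (Extension of CLT by variance continuity.) Let {ξ_l^{(n)}}_{l=1}^n be a triangular array of random variables, 𝓝_n[φ] = Σ_{l=1}^n φ(ξ_l^{(n)}) the corresponding linear statistics, and {d_n} a sequence of positive numbers. Assume: (a) there is a normed vector space 𝓛 of test functions and a constant C with d_n Var{𝓝_n[φ]} ≤ C ‖φ‖² for all φ ∈ 𝓛 and all n; (b) there is a dense linear manifold 𝓛₁ ⊂ 𝓛 and a continuous quadratic functional V : 𝓛₁ → ℝ₊ such that Z_n[xφ] := E{exp(i x d_n^{1/2} 𝓝°_n[φ])} converges to e^{−x²V[φ]/2} as n → ∞, uniformly in x on compact intervals, for every φ ∈ 𝓛₁. Then V admits a continuous extension to 𝓛 and for every φ ∈ 𝓛 one has Z_n[xφ] → e^{−x²V[φ]/2} uniformly in x on compact intervals, i.e. the CLT holds for all φ ∈ 𝓛. -/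

import Mathlib

/- STATEMENT 3: Extension of CLT by variance continuity.
   Given a triangular array `{ξ_l^{(n)}}` with linear statistics
   `𝓝_n[φ] = Σ_l φ(ξ_l^{(n)})` and positive numbers `d_n`, if
   (a) `d_n Var{𝓝_n[φ]} ≤ C‖φ‖²` on a normed space `𝓛` of test functions, and
   (b) on a dense linear manifold `𝓛₁ ⊂ 𝓛` the characteristic functions
       `Z_n[xφ] = E exp(i x d_n^{1/2} 𝓝°_n[φ])` converge to `e^{-x²V[φ]/2}` uniformly
       on compact `x`-intervals, `V` a continuous nonnegative quadratic functional,
   then `V` extends continuously to `𝓛` and the CLT holds for every `φ ∈ 𝓛`. -/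

open MeasureTheory ProbabilityTheory Filter
open Topology

/-- The characteristic function `Z_n[xφ] = E exp(i x d^{1/2} (𝓝_n[φ] - E 𝓝_n[φ]))`
of the normalized centered linear statistic. -/
noncomputable def Zfun {Ω : Type*} [MeasurableSpace Ω] (μ : Measure Ω) {n : ℕ}
    (ξ : Fin n → Ω → ℝ) (d : ℝ) (x : ℝ) (φ : ℝ → ℝ) : ℂ :=
  ∫ ω, Complex.exp (Complex.I * x * Real.sqrt d *
    ((∑ l, φ (ξ l ω)) - ∫ ω', ∑ l, φ (ξ l ω') ∂μ)) ∂μ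

/-! ### Auxiliary lemmas -/

lemma aux_normexpI (t : ℝ) : ‖Complex.exp (Complex.I * t)‖ = 1 := by
  rw [mul_comm]; exact Complex.norm_exp_ofReal_mul_I t

lemma aux_expI_sub_one (t : ℝ) : ‖Complex.exp (Complex.I * t) - 1‖ ≤ |t| := by
  have h : Complex.exp (Complex.I * t) - 1 = Complex.mk (Real.cos t - 1) (Real.sin t) := by
    rw [mul_comm, Complex.exp_mul_I]
    apply Complex.ext <;>
      simp [Complex.cos_ofReal_re, Complex.sin_ofReal_re]
  rw [h]
  rw [Complex.norm_def, Complex.normSq_mk]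
  have h2 : (Real.cos t - 1) * (Real.cos t - 1) + Real.sin t * Real.sin t ≤ t^2 := by
    nlinarith [Real.sin_sq_add_cos_sq t, Real.one_sub_sq_div_two_le_cos (x := t)]
  calc Real.sqrt _ ≤ Real.sqrt (t^2) := Real.sqrt_le_sqrt h2
  _ = |t| := Real.sqrt_sq_eq_abs t

lemma aux_expI_sub (A B : ℝ) :
    ‖Complex.exp (Complex.I * A) - Complex.exp (Complex.I * B)‖ ≤ |A - B| := by
  have h : Complex.exp (Complex.I * A) - Complex.exp (Complex.I * B)
      = Complex.exp (Complex.I * B) * (Complex.exp (Complex.I * ((A - B : ℝ) : ℂ)) - 1) := by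
    rw [mul_sub, ← Complex.exp_add, mul_one]
    congr 1
    push_cast
    ring
  rw [h, norm_mul, aux_normexpI, one_mul]
  exact aux_expI_sub_one _

lemma aux_CS {Ωt : Type} [MeasurableSpace Ωt] (μ : Measure Ωt) [IsProbabilityMeasure μ]
    {Y : Ωt → ℝ} (hY : MemLp Y 2 μ) :
    ∫ ω, |Y ω| ∂μ ≤ Real.sqrt (∫ ω, (Y ω) ^ 2 ∂μ) := by
  set A := ∫ ω, |Y ω| ∂μ with hA
  have hAnn : 0 ≤ A := integral_nonneg fun ω => abs_nonneg _
  have h1 : Integrable (fun ω => (Y ω) ^ 2) μ := hY.integrable_sq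
  have h2 : Integrable (fun ω => |Y ω|) μ := (hY.integrable one_le_two).abs
  have hBnn : 0 ≤ ∫ ω, (Y ω) ^ 2 ∂μ := integral_nonneg fun ω => sq_nonneg _
  rw [show A = Real.sqrt (A ^ 2) from (Real.sqrt_sq hAnn).symm]
  apply Real.sqrt_le_sqrt
  have key : 0 ≤ ∫ ω, (|Y ω| - A) ^ 2 ∂μ := integral_nonneg fun ω => sq_nonneg _
  have expand : ∀ ω, (|Y ω| - A) ^ 2 = (Y ω) ^ 2 - 2 * A * |Y ω| + A ^ 2 := by
    intro ω
    have : |Y ω| ^ 2 = (Y ω) ^ 2 := sq_abs _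
    nlinarith [this]
  rw [show (fun ω => (|Y ω| - A) ^ 2) = fun ω => (Y ω) ^ 2 - 2 * A * |Y ω| + A ^ 2 from
    funext expand] at key
  have h3 : Integrable (fun ω => (Y ω) ^ 2 - 2 * A * |Y ω|) μ := h1.sub (h2.const_mul (2 * A))
  have h4 : Integrable (fun ω => 2 * A * |Y ω|) μ := h2.const_mul (2 * A)
  rw [integral_add h3 (integrable_const _), integral_sub h1 h4, integral_const_mul,
    integral_const] at key
  simp only [probReal_univ, smul_eq_mul, one_mul] at key
  nlinarith [key]

lemma aux_var_eq {Ωt : Type} [MeasurableSpace Ωt] {μ : Measure Ωt} [IsProbabilityMeasure μ]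
    {X : Ωt → ℝ} (hX : MemLp X 2 μ) :
    variance X μ = ∫ ω, (X ω - ∫ ω', X ω' ∂μ) ^ 2 ∂μ := by
  rw [variance_eq_integral hX.aemeasurable]

lemma aux_Zdiff {Ωt : Type} [MeasurableSpace Ωt] (μ : Measure Ωt) [IsProbabilityMeasure μ]
    {n : ℕ} (ξ : Fin n → Ωt → ℝ) {dn : ℝ} (hdn : 0 < dn) (x : ℝ) (f g : ℝ → ℝ)
    (hf : MemLp (fun ω => ∑ l, f (ξ l ω)) 2 μ) (hg : MemLp (fun ω => ∑ l, g (ξ l ω)) 2 μ) :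
    ‖Zfun μ ξ dn x f - Zfun μ ξ dn x g‖ ≤
      |x| * Real.sqrt (dn * variance (fun ω => (∑ l, f (ξ l ω)) - ∑ l, g (ξ l ω)) μ) := by
  classical
  set Sf : Ωt → ℝ := fun ω => ∑ l, f (ξ l ω) with hSf
  set Sg : Ωt → ℝ := fun ω => ∑ l, g (ξ l ω) with hSg
  set mf : ℝ := ∫ ω, Sf ω ∂μ with hmf
  set mg : ℝ := ∫ ω, Sg ω ∂μ with hmg
  set r : ℝ := x * Real.sqrt dn with hr
  have hrw : ∀ (S : Ωt → ℝ) (m : ℝ) (ω : Ωt),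
      Complex.I * x * Real.sqrt dn * ((S ω : ℂ) - (m : ℂ))
        = Complex.I * ((r * (S ω - m) : ℝ) : ℂ) := by
    intro S m ω; push_cast [hr]; ring
  set F : Ωt → ℂ := fun ω => Complex.exp (Complex.I * ((r * (Sf ω - mf) : ℝ) : ℂ)) with hF
  set G : Ωt → ℂ := fun ω => Complex.exp (Complex.I * ((r * (Sg ω - mg) : ℝ) : ℂ)) with hG
  have hint : ∀ (S : Ωt → ℝ) (m : ℝ), MemLp S 2 μ →
      Integrable (fun ω => Complex.exp (Complex.I * ((r * (S ω - m) : ℝ) : ℂ))) μ := by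
    intro S m hS
    have hmeas : AEStronglyMeasurable
        (fun ω => Complex.exp (Complex.I * ((r * (S ω - m) : ℝ) : ℂ))) μ := by
      apply Complex.continuous_exp.comp_aestronglyMeasurable
      apply AEStronglyMeasurable.const_mul
      exact Complex.continuous_ofReal.comp_aestronglyMeasurable
        (((hS.aestronglyMeasurable.sub aestronglyMeasurable_const).const_mul r))
    refine ⟨hmeas, HasFiniteIntegral.of_bounded (C := 1) (ae_of_all _ fun ω => ?_)⟩
    exact le_of_eq (aux_normexpI _)
  have hFi : Integrable F μ := hint Sf mf hf
  have hGi : Integrable G μ := hint Sg mg hg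
  have hZf : Zfun μ ξ dn x f = ∫ ω, F ω ∂μ := by
    unfold Zfun
    congr 1; funext ω; rw [hrw Sf mf ω]
  have hZg : Zfun μ ξ dn x g = ∫ ω, G ω ∂μ := by
    unfold Zfun
    congr 1; funext ω; rw [hrw Sg mg ω]
  rw [hZf, hZg, ← integral_sub hFi hGi]
  have hfint : Integrable Sf μ := hf.integrable one_le_two
  have hgint : Integrable Sg μ := hg.integrable one_le_two
  have hD2 : MemLp (fun ω => Sf ω - Sg ω) 2 μ := hf.sub hg
  have hmd : ∫ ω, (Sf ω - Sg ω) ∂μ = mf - mg := integral_sub hfint hgint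
  calc ‖∫ ω, (F ω - G ω) ∂μ‖ ≤ ∫ ω, ‖F ω - G ω‖ ∂μ := norm_integral_le_integral_norm _
  _ ≤ ∫ ω, |r| * |(Sf ω - Sg ω) - (mf - mg)| ∂μ := by
      apply integral_mono (hFi.sub hGi).norm
        (((((hD2.integrable one_le_two).sub (integrable_const _)).abs).const_mul |r|))
      intro ω
      calc ‖F ω - G ω‖ ≤ |r * (Sf ω - mf) - r * (Sg ω - mg)| := aux_expI_sub _ _
      _ = |r| * |(Sf ω - Sg ω) - (mf - mg)| := by rw [← abs_mul]; ring_nf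
  _ = |r| * ∫ ω, |(Sf ω - Sg ω) - (mf - mg)| ∂μ := integral_const_mul _ _
  _ ≤ |r| * Real.sqrt (∫ ω, ((Sf ω - Sg ω) - (mf - mg)) ^ 2 ∂μ) := by
      apply mul_le_mul_of_nonneg_left _ (abs_nonneg r)
      exact aux_CS μ ((hD2.sub (memLp_const _)))
  _ = |x| * Real.sqrt (dn * variance (fun ω => Sf ω - Sg ω) μ) := by
      rw [aux_var_eq hD2, hmd]
      rw [Real.sqrt_mul hdn.le, hr, abs_mul, abs_of_nonneg (Real.sqrt_nonneg dn)]
      ring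

lemma aux_exp_lower (a b : ℝ) :
    Real.exp (-(max a b)) * |a - b| ≤ |Real.exp (-a) - Real.exp (-b)| := by
  wlog hab : a ≤ b generalizing a b
  · rw [max_comm, abs_sub_comm, abs_sub_comm (Real.exp (-a))]
    exact this b a (le_of_not_ge hab)
  rw [max_eq_right hab]
  have h1 : Real.exp (-b) ≤ Real.exp (-a) := Real.exp_le_exp.mpr (by linarith)
  rw [abs_of_nonneg (by linarith : (0:ℝ) ≤ Real.exp (-a) - Real.exp (-b)),
    abs_of_nonpos (by linarith : a - b ≤ 0)]
  have h2 : Real.exp (-a) = Real.exp (-b) * Real.exp (b - a) := by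
    rw [← Real.exp_add]; ring_nf
  have h3 : (b - a) + 1 ≤ Real.exp (b - a) := Real.add_one_le_exp _
  nlinarith [Real.exp_pos (-b)]

lemma aux_exp_upper {a b : ℝ} (ha : 0 ≤ a) (hb : 0 ≤ b) :
    |Real.exp (-a) - Real.exp (-b)| ≤ |a - b| := by
  wlog hab : a ≤ b generalizing a b
  · rw [abs_sub_comm, abs_sub_comm a b]; exact this hb ha (le_of_not_ge hab)
  have h1 : Real.exp (-b) ≤ Real.exp (-a) := Real.exp_le_exp.mpr (by linarith)
  rw [abs_of_nonneg (by linarith : (0:ℝ) ≤ Real.exp (-a) - Real.exp (-b)),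
    abs_of_nonpos (by linarith : a - b ≤ 0)]
  have h2 : Real.exp (-b) = Real.exp (-a) * Real.exp (a - b) := by
    rw [← Real.exp_add]; ring_nf
  have h3 : (a - b) + 1 ≤ Real.exp (a - b) := Real.add_one_le_exp _
  have h4 : Real.exp (-a) ≤ 1 := Real.exp_le_one_iff.mpr (by linarith)
  nlinarith [Real.exp_pos (-a)]

lemma aux_exp_cast (x u : ℝ) :
    Complex.exp (-(x:ℂ)^2 * (u:ℂ)/2) = ((Real.exp (-(x^2*u/2)) : ℝ) : ℂ) := by
  rw [Complex.ofReal_exp]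
  congr 1
  push_cast
  ring

lemma aux_norm_sub_real (a b : ℝ) : ‖(a:ℂ) - (b:ℂ)‖ = |a - b| := by
  rw [← Complex.ofReal_sub, Complex.norm_real, Real.norm_eq_abs]

set_option maxHeartbeats 1000000 in
theorem stmt3
    -- the normed space 𝓛 of test functions, realized as functions ℝ → ℝ via toFun
    (𝓛 : Type) [NormedAddCommGroup 𝓛] [NormedSpace ℝ 𝓛] (toFun : 𝓛 →ₗ[ℝ] (ℝ → ℝ))
    -- the triangular array on its probability spaces
    (Ω : ℕ → Type) (mΩ : ∀ n, MeasurableSpace (Ω n)) (μ : ∀ n, Measure (Ω n))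
    (hμ : ∀ n, IsProbabilityMeasure (μ n))
    (ξ : ∀ n : ℕ, Fin n → Ω n → ℝ) (hξ : ∀ n l, Measurable (ξ n l))
    (hL2 : ∀ (φ : 𝓛) (n : ℕ), MemLp (fun ω => ∑ l, toFun φ (ξ n l ω)) 2 (μ n))
    -- the normalizing sequence
    (d : ℕ → ℝ) (hd : ∀ n, 0 < d n)
    -- (a) the variance bound
    (Cb : ℝ)
    (ha : ∀ (φ : 𝓛) (n : ℕ),
      d n * variance (fun ω => ∑ l, toFun φ (ξ n l ω)) (μ n) ≤ Cb * ‖φ‖ ^ 2)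
    -- (b) CLT on a dense linear manifold 𝓛₁ with continuous quadratic V ≥ 0
    (𝓛₁ : Submodule ℝ 𝓛) (hdense : Dense (𝓛₁ : Set 𝓛))
    (V : 𝓛₁ → ℝ) (hVcont : Continuous V) (hVpos : ∀ φ, 0 ≤ V φ)
    (hVquad : ∀ (c : ℝ) (φ : 𝓛₁), V (c • φ) = c ^ 2 * V φ)
    (hb : ∀ φ : 𝓛₁, ∀ a c : ℝ,
      TendstoUniformlyOn (fun n x => Zfun (μ n) (ξ n) (d n) x (toFun φ.1))
        (fun x => Complex.exp (-(x : ℂ) ^ 2 * (V φ : ℂ) / 2)) atTop (Set.Icc a c)) :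
    -- conclusion: V extends continuously and CLT holds on all of 𝓛
    ∃ Vbar : 𝓛 → ℝ, Continuous Vbar ∧ (∀ φ : 𝓛₁, Vbar φ.1 = V φ) ∧
      ∀ φ : 𝓛, ∀ a c : ℝ,
        TendstoUniformlyOn (fun n x => Zfun (μ n) (ξ n) (d n) x (toFun φ))
          (fun x => Complex.exp (-(x : ℂ) ^ 2 * (Vbar φ : ℂ) / 2)) atTop (Set.Icc a c) := by
  classical
  have _ := hμ
  set C : ℝ := max Cb 0 with hCdef
  have hC0 : 0 ≤ C := le_max_right _ _
  set K : ℝ := Real.sqrt C with hKdef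
  have hK0 : 0 ≤ K := Real.sqrt_nonneg _
  -- (F) key uniform estimate for the characteristic functions
  have hkey : ∀ (φ ψ : 𝓛) (n : ℕ) (x : ℝ),
      ‖Zfun (μ n) (ξ n) (d n) x (toFun φ) - Zfun (μ n) (ξ n) (d n) x (toFun ψ)‖
        ≤ |x| * (K * ‖φ - ψ‖) := by
    intro φ ψ n x
    have h1 := aux_Zdiff (μ n) (ξ n) (hd n) x (toFun φ) (toFun ψ) (hL2 φ n) (hL2 ψ n)
    have h2 : (fun ω => (∑ l, toFun φ (ξ n l ω)) - ∑ l, toFun ψ (ξ n l ω))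
        = fun ω => ∑ l, toFun (φ - ψ) (ξ n l ω) := by
      funext ω
      rw [map_sub]
      simp [Pi.sub_apply, Finset.sum_sub_distrib]
    rw [h2] at h1
    refine h1.trans ?_
    apply mul_le_mul_of_nonneg_left _ (abs_nonneg x)
    have h3 : d n * variance (fun ω => ∑ l, toFun (φ - ψ) (ξ n l ω)) (μ n) ≤ C * ‖φ - ψ‖^2 :=
      (ha (φ - ψ) n).trans (mul_le_mul_of_nonneg_right (le_max_left _ _) (sq_nonneg _))
    calc Real.sqrt _ ≤ Real.sqrt (C * ‖φ - ψ‖^2) := Real.sqrt_le_sqrt h3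
    _ = K * ‖φ - ψ‖ := by rw [Real.sqrt_mul hC0, Real.sqrt_sq (norm_nonneg _)]
  -- (G) pointwise limits
  have hG : ∀ (φ : 𝓛₁) (x : ℝ), Tendsto (fun n => Zfun (μ n) (ξ n) (d n) x (toFun φ.1)) atTop
      (𝓝 (Complex.exp (-(x:ℂ)^2 * (V φ : ℂ)/2))) :=
    fun φ x => (hb φ x x).tendsto_at (Set.mem_Icc.mpr ⟨le_refl x, le_refl x⟩)
  -- (H) limiting inequality on 𝓛₁
  have hH : ∀ (φ ψ : 𝓛₁) (x : ℝ),
      |Real.exp (-(x^2 * V φ/2)) - Real.exp (-(x^2 * V ψ/2))|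
        ≤ |x| * (K * ‖(φ:𝓛) - (ψ:𝓛)‖) := by
    intro φ ψ x
    have hlim := ((hG φ x).sub (hG ψ x)).norm
    have hle := le_of_tendsto hlim (Filter.Eventually.of_forall fun n => hkey φ.1 ψ.1 n x)
    rwa [aux_exp_cast x (V φ), aux_exp_cast x (V ψ), aux_norm_sub_real] at hle
  -- V 0 = 0
  have hV0 : V 0 = 0 := by
    have := hVquad 0 0
    simpa using this
  -- (I) V is bounded by the norm squared
  have hVbound : ∀ φ : 𝓛₁, V φ ≤ 8 * (K * ‖(φ:𝓛)‖)^2 := by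
    intro φ
    rcases (hVpos φ).eq_or_lt with h0 | h0
    · rw [← h0]; positivity
    · set x := Real.sqrt (2 / V φ) with hx
      have hxpos : 0 < x := Real.sqrt_pos.mpr (by positivity)
      have hx2 : x^2 = 2 / V φ := Real.sq_sqrt (by positivity)
      have hxv : V φ * x^2 = 2 := by rw [hx2]; field_simp
      have h := hH φ 0 x
      rw [hV0] at h
      have e0 : ‖(φ:𝓛) - ((0:𝓛₁):𝓛)‖ = ‖(φ:𝓛)‖ := by simp
      rw [e0] at h
      have hxarg : -(x^2 * V φ/2) = -1 := by
        rw [hx2]; field_simp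
      have hxarg0 : -(x^2 * (0:ℝ)/2) = 0 := by ring
      have hexpm1 : Real.exp (-1) ≤ 1 := Real.exp_le_one_iff.mpr (by norm_num)
      have e1 : |Real.exp (-(x^2 * V φ/2)) - Real.exp (-(x^2 * 0/2))| = 1 - Real.exp (-1) := by
        rw [hxarg, hxarg0, Real.exp_zero,
          abs_of_nonpos (by linarith : Real.exp (-1) - 1 ≤ 0)]
        ring
      rw [e1] at h
      have h2e : (2:ℝ) ≤ Real.exp 1 := by
        have := Real.add_one_le_exp (1:ℝ); linarith
      have hexp1 : Real.exp (-1) ≤ 1/2 := by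
        rw [Real.exp_neg]
        rw [inv_le_comm₀ (Real.exp_pos 1) (by norm_num)]
        linarith
      have h12 : (1:ℝ)/2 ≤ x * (K * ‖(φ:𝓛)‖) := by
        rw [abs_of_nonneg hxpos.le] at h
        linarith
      set t := K * ‖(φ:𝓛)‖ with ht
      have ht0 : 0 ≤ t := by positivity
      have hb2 : (1:ℝ)/4 ≤ (x*t)^2 := by nlinarith
      have hsq : (x*t)^2 = x^2 * t^2 := by ring
      have hx2pos : 0 < x^2 := by positivity
      nlinarith [hb2, hxv, h0, hx2pos, hsq]
  -- (K) Lipschitz estimate for V on 𝓛₁, on norm-bounded sets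
  have hVlip : ∀ (R : ℝ) (φ ψ : 𝓛₁), ‖(φ:𝓛)‖ ≤ R → ‖(ψ:𝓛)‖ ≤ R →
      |V φ - V ψ| ≤ (2 * K * Real.exp (4*C*R^2)) * ‖(φ:𝓛) - (ψ:𝓛)‖ := by
    intro R φ ψ hφR hψR
    have h1 : |Real.exp (-(V φ / 2)) - Real.exp (-(V ψ / 2))| ≤ K * ‖(φ:𝓛) - (ψ:𝓛)‖ := by
      have h1 := hH φ ψ 1
      rw [show -((1:ℝ)^2 * V φ/2) = -(V φ / 2) by ring,
        show -((1:ℝ)^2 * V ψ/2) = -(V ψ / 2) by ring] at h1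
      simpa using h1
    have h2 := aux_exp_lower (V φ / 2) (V ψ / 2)
    have hKC : K^2 = C := Real.sq_sqrt hC0
    have hmax : max (V φ/2) (V ψ/2) ≤ 4*C*R^2 := by
      have hn1 : ‖(φ:𝓛)‖^2 ≤ R^2 := by nlinarith [norm_nonneg (φ:𝓛)]
      have hn2 : ‖(ψ:𝓛)‖^2 ≤ R^2 := by nlinarith [norm_nonneg (ψ:𝓛)]
      have e1 : V φ ≤ 8*C*R^2 := by
        have := hVbound φ
        nlinarith [hC0]
      have e2 : V ψ ≤ 8*C*R^2 := by
        have := hVbound ψ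
        nlinarith [hC0]
      exact max_le (by linarith) (by linarith)
    have hmono : Real.exp (-(4*C*R^2)) ≤ Real.exp (-(max (V φ/2) (V ψ/2))) :=
      Real.exp_le_exp.mpr (neg_le_neg hmax)
    have habsd : |V φ - V ψ| = 2 * |V φ/2 - V ψ/2| := by
      rw [show V φ - V ψ = 2 * (V φ/2 - V ψ/2) by ring, abs_mul]
      norm_num
    have hstep : Real.exp (-(4*C*R^2)) * |V φ/2 - V ψ/2| ≤ K * ‖(φ:𝓛) - (ψ:𝓛)‖ :=
      le_trans (mul_le_mul_of_nonneg_right hmono (abs_nonneg _)) (le_trans h2 h1)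
    have hfin : |V φ - V ψ| * Real.exp (-(4*C*R^2)) ≤ 2 * (K * ‖(φ:𝓛) - (ψ:𝓛)‖) := by
      rw [habsd]; nlinarith [hstep]
    calc |V φ - V ψ|
        = |V φ - V ψ| * (Real.exp (-(4*C*R^2)) * Real.exp (4*C*R^2)) := by
          rw [← Real.exp_add]; simp
      _ = (|V φ - V ψ| * Real.exp (-(4*C*R^2))) * Real.exp (4*C*R^2) := by ring
      _ ≤ (2 * (K * ‖(φ:𝓛) - (ψ:𝓛)‖)) * Real.exp (4*C*R^2) :=
          mul_le_mul_of_nonneg_right hfin (Real.exp_pos _).le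
      _ = (2 * K * Real.exp (4*C*R^2)) * ‖(φ:𝓛) - (ψ:𝓛)‖ := by ring
  -- (L) approximating sequences from the dense submodule
  have hchoice : ∀ (φ : 𝓛) (k : ℕ), ∃ ψ : 𝓛₁, ‖φ - (ψ:𝓛)‖ < 1/((k:ℝ)+1) := by
    intro φ k
    obtain ⟨y, hy, hdy⟩ := hdense.exists_dist_lt φ (show (0:ℝ) < 1/((k:ℝ)+1) by positivity)
    exact ⟨⟨y, hy⟩, by rwa [← dist_eq_norm]⟩
  choose seq hseq using hchoice
  have hfrac1 : ∀ k : ℕ, (1:ℝ)/((k:ℝ)+1) ≤ 1 := by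
    intro k
    rw [div_le_one (by positivity)]
    simp
  have hseqnorm : ∀ (φ : 𝓛) (k : ℕ), ‖((seq φ k : 𝓛₁) : 𝓛)‖ ≤ ‖φ‖ + 1 := by
    intro φ k
    have h := (hseq φ k).le
    have h2 := abs_norm_sub_norm_le φ ((seq φ k : 𝓛₁) : 𝓛)
    have h3 := neg_abs_le (‖φ‖ - ‖((seq φ k : 𝓛₁) : 𝓛)‖)
    have := hfrac1 k
    linarith
  have hfracto0 : Tendsto (fun k : ℕ => 1/((k:ℝ)+1)) atTop (𝓝 0) :=
    tendsto_one_div_add_atTop_nhds_zero_nat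
  -- Cauchy property and definition of Vbar
  have hcauchy : ∀ φ : 𝓛, ∃ l, Tendsto (fun k => V (seq φ k)) atTop (𝓝 l) := by
    intro φ
    set R : ℝ := ‖φ‖ + 1 with hR
    set L : ℝ := 2 * K * Real.exp (4*C*R^2) with hL
    have hL0 : 0 ≤ L := by positivity
    apply cauchySeq_tendsto_of_complete
    apply cauchySeq_of_le_tendsto_0 (b := fun N : ℕ => L * (2/((N:ℝ)+1)))
    · intro j k N hj hk
      rw [Real.dist_eq]
      have h1 := hVlip R (seq φ j) (seq φ k) (hseqnorm φ j) (hseqnorm φ k)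
      have h2 : ‖((seq φ j : 𝓛₁) : 𝓛) - ((seq φ k : 𝓛₁) : 𝓛)‖ ≤ 2/((N:ℝ)+1) := by
        have e1 := (hseq φ j).le
        have e2 := (hseq φ k).le
        have t1 : (1:ℝ)/((j:ℝ)+1) ≤ 1/((N:ℝ)+1) := by
          apply one_div_le_one_div_of_le (by positivity)
          have : (N:ℝ) ≤ (j:ℝ) := Nat.cast_le.mpr hj
          linarith
        have t2 : (1:ℝ)/((k:ℝ)+1) ≤ 1/((N:ℝ)+1) := by
          apply one_div_le_one_div_of_le (by positivity)
          have : (N:ℝ) ≤ (k:ℝ) := Nat.cast_le.mpr hk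
          linarith
        have tri : ‖((seq φ j : 𝓛₁) : 𝓛) - ((seq φ k : 𝓛₁) : 𝓛)‖
            ≤ ‖φ - ((seq φ j : 𝓛₁) : 𝓛)‖ + ‖φ - ((seq φ k : 𝓛₁) : 𝓛)‖ := by
          have : ((seq φ j : 𝓛₁) : 𝓛) - ((seq φ k : 𝓛₁) : 𝓛)
              = (φ - ((seq φ k : 𝓛₁) : 𝓛)) - (φ - ((seq φ j : 𝓛₁) : 𝓛)) := by abel
          rw [this]
          exact (norm_sub_le _ _).trans (by rw [add_comm])
        have hsum : 2/((N:ℝ)+1) = 1/((N:ℝ)+1) + 1/((N:ℝ)+1) := by ring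
        linarith
      calc |V (seq φ j) - V (seq φ k)| ≤ L * ‖((seq φ j : 𝓛₁) : 𝓛) - ((seq φ k : 𝓛₁) : 𝓛)‖ := h1
      _ ≤ L * (2/((N:ℝ)+1)) := mul_le_mul_of_nonneg_left h2 hL0
    · have h0 := hfracto0.const_mul (L * 2)
      rw [mul_zero] at h0
      apply h0.congr
      intro n
      ring
  choose Vbar hVbar using hcauchy
  -- (M) approximation inequality for Vbar
  have happrox : ∀ (φ : 𝓛) (ψ : 𝓛₁) (R : ℝ), ‖φ‖ + 1 ≤ R → ‖(ψ:𝓛)‖ ≤ R →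
      |Vbar φ - V ψ| ≤ (2 * K * Real.exp (4*C*R^2)) * ‖φ - (ψ:𝓛)‖ := by
    intro φ ψ R h1 h2
    set L : ℝ := 2 * K * Real.exp (4*C*R^2) with hL
    have hL0 : 0 ≤ L := by positivity
    have key : ∀ k : ℕ, |V (seq φ k) - V ψ| ≤ L * (‖φ - (ψ:𝓛)‖ + 1/((k:ℝ)+1)) := by
      intro k
      have hlip := hVlip R (seq φ k) ψ (le_trans (hseqnorm φ k) h1) h2
      refine hlip.trans (mul_le_mul_of_nonneg_left ?_ hL0)
      have tri : ‖((seq φ k : 𝓛₁) : 𝓛) - (ψ:𝓛)‖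
          ≤ ‖φ - ((seq φ k : 𝓛₁) : 𝓛)‖ + ‖φ - (ψ:𝓛)‖ := by
        have : ((seq φ k : 𝓛₁) : 𝓛) - (ψ:𝓛) = (φ - (ψ:𝓛)) - (φ - ((seq φ k : 𝓛₁) : 𝓛)) := by
          abel
        rw [this]
        exact (norm_sub_le _ _).trans (by rw [add_comm])
      linarith [(hseq φ k).le]
    have t1 : Tendsto (fun k => |V (seq φ k) - V ψ|) atTop (𝓝 |Vbar φ - V ψ|) := by
      exact (((hVbar φ).sub_const _).abs)
    have t2 : Tendsto (fun k : ℕ => L * (‖φ - (ψ:𝓛)‖ + 1/((k:ℝ)+1))) atTop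
        (𝓝 (L * (‖φ - (ψ:𝓛)‖ + 0))) := by
      exact (tendsto_const_nhds.add hfracto0).const_mul L
    have := le_of_tendsto_of_tendsto' t1 t2 key
    simpa using this
  -- Vbar extends V
  have hVbar_eq : ∀ φ : 𝓛₁, Vbar φ.1 = V φ := by
    intro φ
    have hnn : ‖(φ:𝓛)‖ ≤ ‖(φ:𝓛)‖ + 1 := by linarith [norm_nonneg (φ:𝓛)]
    have h := happrox φ.1 φ (‖(φ:𝓛)‖ + 1) (le_refl _) hnn
    have h0 : (φ.1 : 𝓛) - (φ:𝓛) = 0 := sub_self _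
    rw [h0, norm_zero, mul_zero] at h
    exact sub_eq_zero.mp (abs_eq_zero.mp (le_antisymm h (abs_nonneg _)))
  -- Vbar is nonnegative
  have hVbarnn : ∀ φ, 0 ≤ Vbar φ :=
    fun φ => le_of_tendsto_of_tendsto' tendsto_const_nhds (hVbar φ) (fun k => hVpos _)
  -- Vbar is continuous
  have hVbarcont : Continuous Vbar := by
    rw [continuous_iff_continuousAt]
    intro φ₀
    rw [Metric.continuousAt_iff]
    intro ε hε
    set R : ℝ := ‖φ₀‖ + 3 with hR
    set L : ℝ := 2 * K * Real.exp (4*C*R^2) with hL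
    have hL0 : 0 ≤ L := by positivity
    have hloc : ∀ φ : 𝓛, ‖φ - φ₀‖ ≤ 1 → |Vbar φ - Vbar φ₀| ≤ L * ‖φ - φ₀‖ := by
      intro φ hφ
      have hb1 : ∀ k : ℕ, |Vbar φ - V (seq φ₀ k)| ≤ L * (‖φ - φ₀‖ + 1/((k:ℝ)+1)) := by
        intro k
        have hnφ : ‖φ‖ + 1 ≤ R := by
          have : ‖φ‖ ≤ ‖φ₀‖ + ‖φ - φ₀‖ := by
            calc ‖φ‖ = ‖φ₀ + (φ - φ₀)‖ := by congr 1; abel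
            _ ≤ ‖φ₀‖ + ‖φ - φ₀‖ := norm_add_le _ _
          simp only [hR]
          linarith
        have hns : ‖((seq φ₀ k : 𝓛₁) : 𝓛)‖ ≤ R := by
          have := hseqnorm φ₀ k
          simp only [hR]
          linarith
        have := happrox φ (seq φ₀ k) R hnφ hns
        refine this.trans (mul_le_mul_of_nonneg_left ?_ hL0)
        have tri : ‖φ - ((seq φ₀ k : 𝓛₁) : 𝓛)‖
            ≤ ‖φ - φ₀‖ + ‖φ₀ - ((seq φ₀ k : 𝓛₁) : 𝓛)‖ := by
          have : φ - ((seq φ₀ k : 𝓛₁) : 𝓛) = (φ - φ₀) + (φ₀ - ((seq φ₀ k : 𝓛₁) : 𝓛)) := by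
            abel
          rw [this]
          exact norm_add_le _ _
        linarith [(hseq φ₀ k).le]
      have t1 : Tendsto (fun k => |Vbar φ - V (seq φ₀ k)|) atTop (𝓝 |Vbar φ - Vbar φ₀|) :=
        ((tendsto_const_nhds.sub (hVbar φ₀)).abs)
      have t2 : Tendsto (fun k : ℕ => L * (‖φ - φ₀‖ + 1/((k:ℝ)+1))) atTop
          (𝓝 (L * (‖φ - φ₀‖ + 0))) :=
        (tendsto_const_nhds.add hfracto0).const_mul L
      have := le_of_tendsto_of_tendsto' t1 t2 hb1
      simpa using this
    refine ⟨min 1 (ε/(L+1)), by positivity, ?_⟩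
    intro φ hφδ
    rw [Real.dist_eq]
    rw [dist_eq_norm] at hφδ
    have h1 : ‖φ - φ₀‖ ≤ 1 := le_of_lt (lt_of_lt_of_le hφδ (min_le_left _ _))
    have h2 : ‖φ - φ₀‖ < ε/(L+1) := lt_of_lt_of_le hφδ (min_le_right _ _)
    have h3 := hloc φ h1
    calc |Vbar φ - Vbar φ₀| ≤ L * ‖φ - φ₀‖ := h3
    _ ≤ (L+1) * ‖φ - φ₀‖ := by nlinarith [norm_nonneg (φ - φ₀)]
    _ < (L+1) * (ε/(L+1)) := by
        apply mul_lt_mul_of_pos_left h2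
        linarith
    _ = ε := by field_simp
  refine ⟨Vbar, hVbarcont, hVbar_eq, ?_⟩
  -- the CLT on all of 𝓛
  intro φ a c
  rw [Metric.tendstoUniformlyOn_iff]
  intro ε hε
  set R0 : ℝ := max |a| |c| with hR0
  have hR00 : 0 ≤ R0 := le_trans (abs_nonneg a) (le_max_left _ _)
  have hxb : ∀ x ∈ Set.Icc a c, |x| ≤ R0 := by
    intro x hx
    obtain ⟨hx1, hx2⟩ := hx
    apply abs_le.mpr
    constructor
    · calc -R0 ≤ -|a| := neg_le_neg (le_max_left _ _)
      _ ≤ a := neg_abs_le a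
      _ ≤ x := hx1
    · calc x ≤ c := hx2
      _ ≤ |c| := le_abs_self c
      _ ≤ R0 := le_max_right _ _
  have hT0 : Tendsto (fun k : ℕ => ‖φ - ((seq φ k : 𝓛₁) : 𝓛)‖) atTop (𝓝 0) := by
    apply squeeze_zero (fun k => norm_nonneg _) (fun k => (hseq φ k).le) hfracto0
  have hT1 : Tendsto (fun k : ℕ => (R0 * K) * ‖φ - ((seq φ k : 𝓛₁) : 𝓛)‖) atTop (𝓝 0) := by
    have := hT0.const_mul (R0 * K)
    rwa [mul_zero] at this
  have hT2 : Tendsto (fun k : ℕ => (R0^2/2) * |Vbar φ - V (seq φ k)|) atTop (𝓝 0) := by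
    have h0 : Tendsto (fun k => |Vbar φ - V (seq φ k)|) atTop (𝓝 0) := by
      have h1 : Tendsto (fun k => |Vbar φ - V (seq φ k)|) atTop (𝓝 |Vbar φ - Vbar φ|) :=
        (Tendsto.sub tendsto_const_nhds (hVbar φ)).abs
      simpa using h1
    have := h0.const_mul (R0^2/2)
    rwa [mul_zero] at this
  have hev := (hT1.eventually_lt_const (show (0:ℝ) < ε/3 by linarith)).and
    (hT2.eventually_lt_const (show (0:ℝ) < ε/3 by linarith))
  obtain ⟨k, hk1, hk2⟩ := hev.exists
  set ψ : 𝓛₁ := seq φ k with hψ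
  have hb' := hb ψ a c
  rw [Metric.tendstoUniformlyOn_iff] at hb'
  filter_upwards [hb' (ε/3) (by linarith)] with n hn
  intro x hx
  have hx2 : x^2 ≤ R0^2 := by
    have h := hxb x hx
    calc x^2 = |x|^2 := (sq_abs x).symm
    _ ≤ R0^2 := pow_le_pow_left₀ (abs_nonneg x) h 2
  -- three pieces
  have hA : dist (Complex.exp (-(x:ℂ)^2 * (Vbar φ:ℂ)/2)) (Complex.exp (-(x:ℂ)^2 * (V ψ:ℂ)/2))
      < ε/3 := by
    rw [aux_exp_cast, aux_exp_cast, dist_eq_norm, aux_norm_sub_real]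
    have hu : 0 ≤ x^2 * Vbar φ / 2 :=
      div_nonneg (mul_nonneg (sq_nonneg x) (hVbarnn φ)) (by norm_num)
    have hv : 0 ≤ x^2 * V ψ / 2 :=
      div_nonneg (mul_nonneg (sq_nonneg x) (hVpos ψ)) (by norm_num)
    have h1 : |Real.exp (-(x^2 * Vbar φ/2)) - Real.exp (-(x^2 * V ψ/2))|
        ≤ |x^2 * Vbar φ/2 - x^2 * V ψ/2| := aux_exp_upper hu hv
    have h2 : |x^2 * Vbar φ/2 - x^2 * V ψ/2| = (x^2/2) * |Vbar φ - V ψ| := by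
      rw [show x^2 * Vbar φ/2 - x^2 * V ψ/2 = (x^2/2) * (Vbar φ - V ψ) by ring, abs_mul,
        abs_of_nonneg (by positivity : (0:ℝ) ≤ x^2/2)]
    have h3 : (x^2/2) * |Vbar φ - V ψ| ≤ (R0^2/2) * |Vbar φ - V ψ| := by
      apply mul_le_mul_of_nonneg_right _ (abs_nonneg _)
      linarith
    calc |Real.exp (-(x^2 * Vbar φ/2)) - Real.exp (-(x^2 * V ψ/2))|
        ≤ (R0^2/2) * |Vbar φ - V ψ| := by linarith [h1, h2.le, h3]
    _ < ε/3 := hk2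
  have hB : dist (Complex.exp (-(x:ℂ)^2 * (V ψ:ℂ)/2)) (Zfun (μ n) (ξ n) (d n) x (toFun ψ.1))
      < ε/3 := hn x hx
  have hC : dist (Zfun (μ n) (ξ n) (d n) x (toFun ψ.1)) (Zfun (μ n) (ξ n) (d n) x (toFun φ))
      < ε/3 := by
    rw [dist_eq_norm]
    have h1 := hkey ψ.1 φ n x
    have h2 : ‖(ψ.1 : 𝓛) - φ‖ = ‖φ - ((seq φ k : 𝓛₁) : 𝓛)‖ := by
      rw [norm_sub_rev]
    calc ‖Zfun (μ n) (ξ n) (d n) x (toFun ψ.1) - Zfun (μ n) (ξ n) (d n) x (toFun φ)‖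
        ≤ |x| * (K * ‖(ψ.1 : 𝓛) - φ‖) := h1
    _ ≤ R0 * (K * ‖(ψ.1 : 𝓛) - φ‖) := by
        apply mul_le_mul_of_nonneg_right (hxb x hx)
        positivity
    _ = (R0 * K) * ‖φ - ((seq φ k : 𝓛₁) : 𝓛)‖ := by rw [h2]; ring
    _ < ε/3 := hk1
  calc dist (Complex.exp (-(x:ℂ)^2 * (Vbar φ:ℂ)/2)) (Zfun (μ n) (ξ n) (d n) x (toFun φ))
      ≤ dist (Complex.exp (-(x:ℂ)^2 * (Vbar φ:ℂ)/2)) (Complex.exp (-(x:ℂ)^2 * (V ψ:ℂ)/2))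
        + dist (Complex.exp (-(x:ℂ)^2 * (V ψ:ℂ)/2)) (Zfun (μ n) (ξ n) (d n) x (toFun ψ.1))
        + dist (Zfun (μ n) (ξ n) (d n) x (toFun ψ.1)) (Zfun (μ n) (ξ n) (d n) x (toFun φ)) :=
      dist_triangle4 _ _ _ _
  _ < ε/3 + ε/3 + ε/3 := by linarith [hA, hB, hC]
  _ = ε := by ring
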